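/- arXiv:0809.0433 — 3 statements merged into one kernel-verified Lean document; each statement's English description precedes it below -/
import Mathlib

section
/- Let n, m ≥ 1 be natural numbers and i, j integers with 0 ≤ i < n and 0 ≤ j < n satisfying n ∣ i·(j−1) and n ∣ j^m − 1. Then the presented group ⟨a, b ∣ a^n, b^m·a^(−i), b^(−1)·a·b·a^(−j)⟩ is a finite group of cardinality m·n, the cyclic subgroup generated by the image of a is a normal subgroup of order n, and the quotient by this subgroup is cyclic of order m. -/
open Multiplicative SemidirectProduct

namespace CPAux

variable {n : ℕ} (u : (ZMod n)ˣ)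

def autHom : Multiplicative (AddAut (ZMod n)) →* MulAut (Multiplicative (ZMod n)) where
  toFun e := AddEquiv.toMultiplicative e.toAdd
  map_one' := rfl
  map_mul' _ _ := rfl

def phi : Multiplicative ℤ →* MulAut (Multiplicative (ZMod n)) :=
  ((autHom).comp (DistribMulAction.toAddAut (ZMod n)ˣ (ZMod n))).comp (zpowersHom _ u⁻¹)

lemma phi_apply (y : ℤ) (x : ZMod n) :
    phi u (ofAdd y) (ofAdd x) = ofAdd (((u⁻¹ ^ y : (ZMod n)ˣ) : ZMod n) * x) := rfl

variable (i : ℤ) (m : ℕ)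

/-- the stabilizer subgroup of `i` -/
def stab : Subgroup (ZMod n)ˣ where
  carrier := {w | (i : ZMod n) * ↑w = i}
  one_mem' := by simp
  mul_mem' := by
    intro a b ha hb
    simp only [Set.mem_setOf_eq] at *
    rw [Units.val_mul, ← mul_assoc, ha, hb]
  inv_mem' := by
    intro a ha
    simp only [Set.mem_setOf_eq] at *
    calc (i : ZMod n) * ↑a⁻¹ = ((i : ZMod n) * a) * ↑a⁻¹ := by rw [ha]
    _ = i := by rw [mul_assoc, ← Units.val_mul, mul_inv_cancel, Units.val_one, mul_one]

abbrev G0 := Multiplicative (ZMod n) ⋊[phi u] Multiplicative ℤ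

def c : G0 u := ⟨ofAdd (-(i : ZMod n)), ofAdd (m : ℤ)⟩

variable (hum : u ^ m = 1) (hui : (i : ZMod n) * ↑u = i)

include hum in
lemma phi_m : phi u (ofAdd (m : ℤ)) = 1 := by
  ext x
  simp only [MulAut.one_apply]
  conv_lhs => rw [← ofAdd_toAdd x]
  rw [phi_apply, zpow_natCast, inv_pow, hum, inv_one, Units.val_one, one_mul, ofAdd_toAdd]

include hui in
lemma phi_fix (y : ℤ) : phi u (ofAdd y) (ofAdd (-(i : ZMod n))) = ofAdd (-(i : ZMod n)) := by
  rw [phi_apply]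
  congr 1
  have hmem : u⁻¹ ^ y ∈ stab (n := n) i := Subgroup.zpow_mem _ (Subgroup.inv_mem _ hui) y
  have : (i : ZMod n) * ↑(u⁻¹ ^ y) = i := hmem
  rw [mul_neg, mul_comm, this]

include hum hui in
lemma c_central (g : G0 u) : g * c u i m = c u i m * g := by
  ext
  · show g.1 * phi u g.2 (c u i m).1 = (c u i m).1 * phi u (c u i m).2 g.1
    have h2 : phi u (c u i m).2 g.1 = g.1 := by rw [c, phi_m u m hum, MulAut.one_apply]
    have h1 : phi u g.2 (c u i m).1 = (c u i m).1 := by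
      conv_lhs => rw [← ofAdd_toAdd g.2]
      exact phi_fix u i hui g.2.toAdd
    rw [h1, h2, mul_comm]
  · show g.2 * (c u i m).2 = (c u i m).2 * g.2
    exact mul_comm _ _


def Z : Subgroup (G0 u) := Subgroup.zpowers (c u i m)

include hum hui in
lemma Z_normal : (Z u i m).Normal := by
  constructor
  intro x hx g
  obtain ⟨k, rfl⟩ := hx
  have hc : Commute (c u i m) g := (c_central u i m hum hui g).symm
  have : g * (c u i m) ^ k * g⁻¹ = (c u i m) ^ k := by
    rw [(hc.zpow_left k).symm.eq, mul_assoc, mul_inv_cancel, mul_one]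
  rw [this]
  exact Subgroup.zpow_mem _ (Subgroup.mem_zpowers _) k

variable [hZ : (Z u i m).Normal]

abbrev Gq := G0 u ⧸ Z u i m

-- the quotient map
def q : G0 u →* Gq u i m := QuotientGroup.mk' (Z u i m)

lemma q_c : q u i m (c u i m) = 1 :=
  (QuotientGroup.eq_one_iff _).2 (Subgroup.mem_zpowers _)

omit hum hui in
lemma key_inj (x₁ x₂ y₁ y₂ : ℕ) (hx₁ : x₁ < n) (hx₂ : x₂ < n) (hy₁ : y₁ < m) (hy₂ : y₂ < m)
    (h : q u i m (⟨ofAdd (x₁ : ZMod n), ofAdd (y₁ : ℤ)⟩ : G0 u)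
       = q u i m (⟨ofAdd (x₂ : ZMod n), ofAdd (y₂ : ℤ)⟩ : G0 u)) :
    x₁ = x₂ ∧ y₁ = y₂ := by
  rw [q, QuotientGroup.mk'_apply, QuotientGroup.mk'_apply, QuotientGroup.eq] at h
  obtain ⟨k, hk⟩ := h
  have hr := congrArg (SemidirectProduct.rightHom) hk
  rw [map_zpow, map_mul, map_inv] at hr
  have hr' : (m : ℤ) * k = -(y₁ : ℤ) + y₂ := by
    have := congrArg toAdd hr
    simp only [c] at this
    simpa [mul_comm, add_comm] using this
  have hk0 : k = 0 := by
    rcases lt_trichotomy k 0 with h' | h' | h'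
    · nlinarith [hr', h'.le]
    · exact h'
    · nlinarith [hr', h']
  subst hk0
  simp only [zpow_zero] at hk
  have := hk.symm
  rw [inv_mul_eq_one] at this
  have h1 : ((x₁ : ZMod n)) = x₂ := congrArg (fun z => toAdd z.left) this
  have h2 : (y₁ : ℤ) = y₂ := congrArg (fun z => toAdd z.right) this
  refine ⟨?_, by exact_mod_cast h2⟩
  have := congrArg ZMod.val h1
  rwa [ZMod.val_natCast_of_lt hx₁, ZMod.val_natCast_of_lt hx₂] at this


lemma inl_pow_nat (x : ℕ) :
    (inl (ofAdd (1 : ZMod n)) : G0 u) ^ x = inl (ofAdd (x : ZMod n)) := by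
  rw [← map_pow]
  congr 1
  rw [← ofAdd_nsmul]
  norm_num

lemma inl_zpow (x : ℤ) :
    (inl (ofAdd (1 : ZMod n)) : G0 u) ^ x = inl (ofAdd ((x : ℤ) : ZMod n)) := by
  rw [← map_zpow]
  congr 1
  rw [← ofAdd_zsmul]
  norm_num

lemma inr_pow_nat (x : ℕ) :
    (inr (ofAdd (1 : ℤ)) : G0 u) ^ x = inr (ofAdd (x : ℤ)) := by
  rw [← map_pow]
  congr 1
  rw [← ofAdd_nsmul]
  norm_num

omit hZ in
lemma rel1_G0 : (inl (ofAdd (1 : ZMod n)) : G0 u) ^ n = 1 := by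
  rw [inl_pow_nat, ZMod.natCast_self]
  simp

omit hZ in
include hum in
lemma rel2_G0 :
    (inr (ofAdd (1 : ℤ)) : G0 u) ^ m * (inl (ofAdd (1 : ZMod n)) : G0 u) ^ (-i) = c u i m := by
  rw [inr_pow_nat, inl_zpow]
  ext
  · show (1 : Multiplicative (ZMod n)) * phi u (ofAdd (m : ℤ)) (ofAdd ((-i : ℤ) : ZMod n))
        = ofAdd (-(i : ZMod n))
    rw [phi_m u m hum]
    push_cast
    simp
  · show (m : ℤ) + 0 = (m : ℤ)
    simp

omit hZ in
lemma rel3_G0 {j : ℤ} (hu : (u : ZMod n) = (j : ℤ)) :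
    (inr (ofAdd (1 : ℤ)) : G0 u)⁻¹ * inl (ofAdd (1 : ZMod n)) * inr (ofAdd (1 : ℤ))
      * (inl (ofAdd (1 : ZMod n)) : G0 u) ^ (-j) = 1 := by
  have h1 : (inr ((ofAdd (1 : ℤ))⁻¹) : G0 u) * inl (ofAdd (1 : ZMod n)) * inr (ofAdd (1 : ℤ))
      = inl ((phi u (ofAdd (1:ℤ)))⁻¹ (ofAdd (1 : ZMod n))) := (inl_aut_inv _ _).symm
  have h2 : (phi u (ofAdd (1:ℤ)))⁻¹ (ofAdd (1 : ZMod n)) = ofAdd ((j : ℤ) : ZMod n) := by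
    rw [← map_inv, ← ofAdd_neg, phi_apply]
    rw [← hu]
    norm_num
  rw [← map_inv, h1, h2, inl_zpow, ← map_mul, ← ofAdd_add]
  norm_num

end CPAux

/-- The presented group `⟨a, b ∣ aⁿ, bᵐ a⁻ⁱ, b⁻¹ a b a⁻ʲ⟩` (with `n ∣ i(j-1)` and
`n ∣ jᵐ - 1`) is a finite group of cardinality `m·n`; the cyclic subgroup generated by the
image of `a` is a normal subgroup of order `n`, and the quotient by it is cyclic of
order `m`. -/
theorem presented_crossed_product_structure
    (n m : ℕ) (hn : 1 ≤ n) (hm : 1 ≤ m) (i j : ℤ)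
    (hi0 : 0 ≤ i) (hin : i < n) (hj0 : 0 ≤ j) (hjn : j < n)
    (hdvd1 : (n : ℤ) ∣ i * (j - 1)) (hdvd2 : (n : ℤ) ∣ j ^ m - 1) :
    let rels : Set (FreeGroup (Fin 2)) :=
      {FreeGroup.of 0 ^ n,
        FreeGroup.of 1 ^ m * FreeGroup.of 0 ^ (-i),
        (FreeGroup.of 1)⁻¹ * FreeGroup.of 0 * FreeGroup.of 1 * FreeGroup.of 0 ^ (-j)}
    let P := PresentedGroup rels
    let A : Subgroup P := Subgroup.zpowers (PresentedGroup.of 0)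
    Finite P ∧ Nat.card P = m * n ∧ Nat.card A = n ∧
      ∃ hN : A.Normal,
        (haveI := hN; IsCyclic (P ⧸ A) ∧ Nat.card (P ⧸ A) = m) := by
  intro rels P A
  have hm0 : m ≠ 0 := by omega
  have hn0 : n ≠ 0 := by omega
  set a : P := PresentedGroup.of 0 with ha_def
  set b : P := PresentedGroup.of 1 with hb_def
  -- relations hold in P
  have hrelP : ∀ r ∈ rels, PresentedGroup.mk rels r = 1 := fun r hr =>
    (QuotientGroup.eq_one_iff _).2 (Subgroup.subset_normalClosure hr)
  have ha : a ^ n = 1 := by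
    have := hrelP _ (show FreeGroup.of 0 ^ n ∈ rels by left; rfl)
    rwa [map_pow] at this
  have hb : b ^ m * a ^ (-i) = 1 := by
    have := hrelP _ (show FreeGroup.of 1 ^ m * FreeGroup.of 0 ^ (-i) ∈ rels by
      right; left; rfl)
    rwa [map_mul, map_pow, map_zpow] at this
  have hab : b⁻¹ * a * b * a ^ (-j) = 1 := by
    have := hrelP _ (show (FreeGroup.of 1)⁻¹ * FreeGroup.of 0 * FreeGroup.of 1 *
        FreeGroup.of 0 ^ (-j) ∈ rels by right; right; rfl)
    rwa [map_mul, map_mul, map_mul, map_inv, map_zpow] at this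
  have hb' : b ^ m = a ^ i := by
    have := hb
    rw [zpow_neg, mul_inv_eq_one] at this
    exact this
  have hab' : b⁻¹ * a * b = a ^ j := by
    have := hab
    rw [zpow_neg, mul_inv_eq_one] at this
    exact this
  -- a^t = 1 when n ∣ t
  have han : ∀ t : ℤ, (n : ℤ) ∣ t → a ^ t = 1 := by
    rintro t ⟨k, rfl⟩
    rw [zpow_mul, zpow_natCast, ha, one_zpow]
  -- conjugation laws
  have hconj : ∀ s : ℤ, b⁻¹ * a ^ s * b = a ^ (j * s) := by
    intro s
    have h1 : (b⁻¹ * a * b) ^ s = b⁻¹ * a ^ s * b := by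
      have : b⁻¹ * a * b = b⁻¹ * a * b⁻¹⁻¹ := by rw [inv_inv]
      rw [this, conj_zpow, inv_inv]
    rw [← h1, hab', ← zpow_mul, mul_comm j s, mul_comm s j]
  have hjm : ∀ s : ℤ, a ^ (j ^ m * s) = a ^ s := by
    intro s
    have h1 : a ^ ((j ^ m - 1) * s) = 1 := han _ (Dvd.dvd.mul_right hdvd2 s)
    calc a ^ (j ^ m * s) = a ^ ((j ^ m - 1) * s + s) := by congr 1; ring
    _ = a ^ ((j ^ m - 1) * s) * a ^ s := zpow_add a _ _
    _ = a ^ s := by rw [h1, one_mul]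
  have hbab : b * a * b⁻¹ = a ^ (j ^ (m - 1)) := by
    have h1 : b⁻¹ * a ^ (j ^ (m - 1)) * b = a := by
      rw [hconj]
      have h2 : j * j ^ (m - 1) = j ^ m * 1 := by
        conv_rhs => rw [show m = 1 + (m - 1) by omega]
        rw [pow_add, pow_one, mul_one]
      rw [h2, hjm 1, zpow_one]
    have := congrArg (fun x => b * x * b⁻¹) h1
    rw [← this]
    group
  -- normality of A
  have hN : A.Normal := by
    rw [← Subgroup.normalizer_eq_top_iff]
    rw [← top_le_iff, ← PresentedGroup.closure_range_of rels]
    rw [Subgroup.closure_le]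
    rintro x ⟨y, rfl⟩
    fin_cases y
    · exact Subgroup.le_normalizer (Subgroup.mem_zpowers a)
    · rw [SetLike.mem_coe, Subgroup.mem_normalizer_iff]
      intro h
      constructor
      · rintro ⟨s, rfl⟩
        refine ⟨j ^ (m - 1) * s, ?_⟩
        show a ^ (j ^ (m - 1) * s) = b * a ^ s * b⁻¹
        rw [zpow_mul, ← hbab, conj_zpow]
      · rintro ⟨s, hs⟩
        have hs' : a ^ s = b * h * b⁻¹ := hs
        have hh : h = b⁻¹ * a ^ s * b := by
          rw [hs']; group
        rw [hh, hconj]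
        exact ⟨j * s, rfl⟩
  refine ?_
  haveI := hN
  -- the quotient
  set b' : P ⧸ A := QuotientGroup.mk b with hb'def
  have hb'm : b' ^ m = 1 := by
    rw [hb'def, ← QuotientGroup.mk_pow, hb', QuotientGroup.eq_one_iff]
    exact ⟨i, rfl⟩
  have htop : ∀ x : P ⧸ A, x ∈ Subgroup.zpowers b' := by
    intro x
    obtain ⟨p, rfl⟩ := QuotientGroup.mk'_surjective A x
    refine PresentedGroup.generated_by rels
      ((Subgroup.zpowers b').comap (QuotientGroup.mk' A)) ?_ p
    intro y
    fin_cases y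
    · show QuotientGroup.mk' A a ∈ Subgroup.zpowers b'
      have : QuotientGroup.mk' A a = 1 := (QuotientGroup.eq_one_iff _).2 ⟨1, zpow_one a⟩
      rw [this]
      exact one_mem _
    · exact Subgroup.mem_zpowers b'
  have hcyc : IsCyclic (P ⧸ A) := ⟨⟨b', htop⟩⟩
  have hztop : Subgroup.zpowers b' = ⊤ := by rw [Subgroup.eq_top_iff']; exact htop
  have hcardQ : Nat.card (P ⧸ A) = orderOf b' := by
    rw [← Nat.card_zpowers, hztop, Subgroup.card_top]
  have hofb' : IsOfFinOrder b' := isOfFinOrder_iff_pow_eq_one.2 ⟨m, by omega, hb'm⟩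
  have hQ0 : Nat.card (P ⧸ A) ≠ 0 := by rw [hcardQ]; exact hofb'.orderOf_pos.ne'
  haveI hQfin : Finite (P ⧸ A) := Nat.finite_of_card_ne_zero hQ0
  have hQdvd : Nat.card (P ⧸ A) ∣ m := by rw [hcardQ]; exact orderOf_dvd_of_pow_eq_one hb'm
  -- A side
  have hcardA : Nat.card A = orderOf a := Nat.card_zpowers a
  have hofa : IsOfFinOrder a := isOfFinOrder_iff_pow_eq_one.2 ⟨n, by omega, ha⟩
  have hA0 : Nat.card A ≠ 0 := by rw [hcardA]; exact hofa.orderOf_pos.ne'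
  haveI hAfin : Finite A := Nat.finite_of_card_ne_zero hA0
  have hAdvd : Nat.card A ∣ n := by rw [hcardA]; exact orderOf_dvd_of_pow_eq_one ha
  haveI hPfin : Finite P :=
    Finite.of_equiv _ (Subgroup.groupEquivQuotientProdSubgroup (s := A)).symm
  have hcardP : Nat.card P = Nat.card (P ⧸ A) * Nat.card A :=
    Subgroup.card_eq_card_quotient_mul_card_subgroup A
  -- lower bound via the model group
  have hjm1 : ((j : ZMod n)) ^ m = 1 := by
    have h0 : ((j ^ m - 1 : ℤ) : ZMod n) = 0 := (ZMod.intCast_zmod_eq_zero_iff_dvd _ n).2 hdvd2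
    push_cast at h0
    linear_combination h0
  set u : (ZMod n)ˣ := ⟨(j : ZMod n), (j : ZMod n) ^ (m - 1),
      by rw [← pow_succ', show m - 1 + 1 = m by omega]; exact hjm1,
      by rw [← pow_succ, show m - 1 + 1 = m by omega]; exact hjm1⟩ with hu_def
  have hu : (u : ZMod n) = (j : ℤ) := rfl
  have hum : u ^ m = 1 := by
    ext
    push_cast [hu]
    exact hjm1
  have hui : ((i : ℤ) : ZMod n) * ↑u = ((i : ℤ) : ZMod n) := by
    have h0 : ((i * (j - 1) : ℤ) : ZMod n) = 0 := (ZMod.intCast_zmod_eq_zero_iff_dvd _ n).2 hdvd1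
    push_cast at h0
    rw [hu]
    linear_combination h0
  haveI hZn : (CPAux.Z u i m).Normal := CPAux.Z_normal u i m hum hui
  set f : Fin 2 → CPAux.Gq u i m :=
    ![CPAux.q u i m (inl (ofAdd (1 : ZMod n))), CPAux.q u i m (inr (ofAdd (1 : ℤ)))] with hf_def
  have hrelsG : ∀ r ∈ rels, FreeGroup.lift f r = 1 := by
    intro r hr
    rcases hr with hr | hr | hr
    · subst hr
      rw [map_pow, FreeGroup.lift_apply_of]
      show (CPAux.q u i m (inl (ofAdd (1 : ZMod n)))) ^ n = 1
      rw [← map_pow, CPAux.rel1_G0, map_one]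
    · subst hr
      rw [map_mul, map_pow, map_zpow, FreeGroup.lift_apply_of, FreeGroup.lift_apply_of]
      show (CPAux.q u i m (inr (ofAdd (1 : ℤ)))) ^ m *
        (CPAux.q u i m (inl (ofAdd (1 : ZMod n)))) ^ (-i) = 1
      rw [← map_pow, ← map_zpow, ← map_mul, CPAux.rel2_G0 u i m hum, CPAux.q_c]
    · rw [Set.mem_singleton_iff] at hr
      subst hr
      rw [map_mul, map_mul, map_mul, map_inv, map_zpow, FreeGroup.lift_apply_of, FreeGroup.lift_apply_of]
      show (CPAux.q u i m (inr (ofAdd (1 : ℤ))))⁻¹ * CPAux.q u i m (inl (ofAdd (1 : ZMod n))) *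
        CPAux.q u i m (inr (ofAdd (1 : ℤ))) *
        (CPAux.q u i m (inl (ofAdd (1 : ZMod n)))) ^ (-j) = 1
      rw [← map_inv, ← map_mul, ← map_mul, ← map_zpow, ← map_mul,
        CPAux.rel3_G0 u hu, map_one]
  set F : P →* CPAux.Gq u i m := PresentedGroup.toGroup hrelsG with hF_def
  have hFa : F a = CPAux.q u i m (inl (ofAdd (1 : ZMod n))) := PresentedGroup.toGroup.of hrelsG
  have hFb : F b = CPAux.q u i m (inr (ofAdd (1 : ℤ))) := PresentedGroup.toGroup.of hrelsG
  have hinj : Function.Injective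
      (fun p : Fin n × Fin m => a ^ (p.1 : ℕ) * b ^ (p.2 : ℕ)) := by
    intro p p' hpp
    have hFval : ∀ (x y : ℕ), F (a ^ x * b ^ y)
        = CPAux.q u i m (⟨ofAdd ((x : ZMod n)), ofAdd ((y : ℤ))⟩ : CPAux.G0 u) := by
      intro x y
      rw [map_mul, map_pow, map_pow, hFa, hFb, ← map_pow (CPAux.q u i m),
        ← map_pow (CPAux.q u i m), CPAux.inl_pow_nat, CPAux.inr_pow_nat, ← map_mul,
        ← SemidirectProduct.mk_eq_inl_mul_inr]
    have hpp' : a ^ (p.1 : ℕ) * b ^ (p.2 : ℕ) = a ^ (p'.1 : ℕ) * b ^ (p'.2 : ℕ) := hpp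
    have := congrArg F hpp'
    rw [hFval, hFval] at this
    obtain ⟨h1, h2⟩ := CPAux.key_inj u i m (p.1 : ℕ) (p'.1 : ℕ) (p.2 : ℕ) (p'.2 : ℕ)
      p.1.isLt p'.1.isLt p.2.isLt p'.2.isLt this
    exact Prod.ext (Fin.ext h1) (Fin.ext h2)
  have hlow : n * m ≤ Nat.card P := by
    calc n * m = Nat.card (Fin n × Fin m) := by simp
    _ ≤ Nat.card P := Nat.card_le_card_of_injective _ hinj
  -- final arithmetic
  have hAle : Nat.card A ≤ n := Nat.le_of_dvd (by omega) hAdvd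
  have hQle : Nat.card (P ⧸ A) ≤ m := Nat.le_of_dvd (by omega) hQdvd
  have hnle : n ≤ Nat.card A := by
    have h1 : m * n ≤ m * Nat.card A := by
      calc m * n = n * m := mul_comm _ _
      _ ≤ Nat.card P := hlow
      _ = Nat.card (P ⧸ A) * Nat.card A := hcardP
      _ ≤ m * Nat.card A := Nat.mul_le_mul_right _ hQle
    exact Nat.le_of_mul_le_mul_left h1 (by omega)
  have hmle : m ≤ Nat.card (P ⧸ A) := by
    have h1 : Nat.card A * m ≤ Nat.card A * Nat.card (P ⧸ A) := by
      calc Nat.card A * m ≤ n * m := Nat.mul_le_mul_right _ hAle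
      _ ≤ Nat.card P := hlow
      _ = Nat.card (P ⧸ A) * Nat.card A := hcardP
      _ = Nat.card A * Nat.card (P ⧸ A) := mul_comm _ _
    exact Nat.le_of_mul_le_mul_left h1 (by omega)
  have hcardA' : Nat.card A = n := le_antisymm hAle hnle
  have hcardQ' : Nat.card (P ⧸ A) = m := le_antisymm hQle hmle
  exact ⟨hPfin, by rw [hcardP, hcardA', hcardQ'], hcardA', hN, hcyc, hcardQ'⟩
end

section
/- Let n ≥ 2 be a natural number and t an integer with gcd(t, n) = 1. Then the presented group ⟨a, g ∣ a^n, g^(−1)·a·g·a^(−t)⟩ is not a cyclic group (it is an infinite group containing an element of finite order n > 1). -/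
open SemidirectProduct Multiplicative

/-- For `n ≥ 2` and `gcd(t, n) = 1`, the presented group `⟨a, g ∣ aⁿ, g⁻¹ a g a⁻ᵗ⟩`
is not cyclic: it is an infinite group containing an element of finite order `n > 1`. -/
theorem presented_group_finite_by_infinite_not_cyclic
    (n : ℕ) (hn : 2 ≤ n) (t : ℤ) (ht : Int.gcd t n = 1) :
    let P := PresentedGroup
      ({FreeGroup.of 0 ^ n,
        (FreeGroup.of 1)⁻¹ * FreeGroup.of 0 * FreeGroup.of 1 * FreeGroup.of 0 ^ (-t)} :
        Set (FreeGroup (Fin 2)))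
    ¬ IsCyclic P ∧ Infinite P ∧ ∃ x : P, orderOf x = n := by
  intro P
  set rels : Set (FreeGroup (Fin 2)) :=
    {FreeGroup.of 0 ^ n,
     (FreeGroup.of 1)⁻¹ * FreeGroup.of 0 * FreeGroup.of 1 * FreeGroup.of 0 ^ (-t)} with hrels
  -- t is a unit mod n
  have hcop : IsCoprime t (n : ℤ) := Int.isCoprime_iff_gcd_eq_one.mpr ht
  obtain ⟨a, b, hab⟩ := hcop
  have hu : IsUnit ((t : ZMod n)) := by
    refine IsUnit.of_mul_eq_one ((a : ZMod n)) ?_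
    have h := congrArg (Int.cast : ℤ → ZMod n) hab
    push_cast at h
    rw [ZMod.natCast_self] at h
    rw [mul_comm]
    simpa using h
  set u := hu.unit with hu'
  have hu1 : (u : ZMod n) = (t : ZMod n) := rfl
  let α : MulAut (Multiplicative (ZMod n)) := AddEquiv.toMultiplicative (AddAut.mulLeft u⁻¹)
  let φ : Multiplicative ℤ →* MulAut (Multiplicative (ZMod n)) := zpowersHom _ α
  let S := SemidirectProduct (Multiplicative (ZMod n)) (Multiplicative ℤ) φ
  let f : Fin 2 → S := ![SemidirectProduct.inl (ofAdd (1 : ZMod n)),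
                         SemidirectProduct.inr (ofAdd (1 : ℤ))]
  have hf0 : f 0 = SemidirectProduct.inl (ofAdd (1 : ZMod n)) := rfl
  have hf1 : f 1 = SemidirectProduct.inr (ofAdd (1 : ℤ)) := rfl
  have hrel : ∀ r ∈ rels, FreeGroup.lift f r = 1 := by
    intro r hr
    rcases hr with hr | hr
    · subst hr
      have h1 : (ofAdd (1 : ZMod n)) ^ n = 1 := by
        rw [← ofAdd_nsmul]
        simp [nsmul_eq_mul]
      rw [map_pow, FreeGroup.lift_apply_of, hf0, ← map_pow, h1, map_one]
    · simp only [Set.mem_singleton_iff] at hr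
      subst hr
      simp only [map_mul, map_inv, map_zpow, FreeGroup.lift_apply_of, hf0, hf1]
      rw [← map_inv, ← SemidirectProduct.inl_aut_inv (φ := φ) (ofAdd (1:ℤ)) (ofAdd (1 : ZMod n))]
      rw [← map_zpow, ← map_mul]
      convert map_one (SemidirectProduct.inl (φ := φ))
      have hφ : (φ (ofAdd (1:ℤ)))⁻¹ (ofAdd (1 : ZMod n)) = ofAdd ((u : ZMod n) * 1) := by
        show ((zpowersHom _ α) (ofAdd (1:ℤ)))⁻¹ (ofAdd (1 : ZMod n)) = _
        rw [zpowersHom_apply]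
        simp only [toAdd_ofAdd, zpow_one]
        rfl
      rw [hφ]
      rw [← ofAdd_zsmul, ← ofAdd_add]
      rw [hu1]
      simp [zsmul_eq_mul]
  let F : P →* S := PresentedGroup.toGroup hrel
  -- the generator a := of 0 has order n
  have hxn : (PresentedGroup.of (rels := rels) 0) ^ n = 1 := by
    show (QuotientGroup.mk (FreeGroup.of 0) : PresentedGroup rels) ^ n = 1
    rw [← QuotientGroup.mk_pow, QuotientGroup.eq_one_iff]
    exact Subgroup.subset_normalClosure (Or.inl rfl)
  have hFx : F (PresentedGroup.of 0) = SemidirectProduct.inl (ofAdd (1 : ZMod n)) :=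
    PresentedGroup.toGroup.of hrel
  have horderFx : orderOf (F (PresentedGroup.of 0)) = n := by
    rw [hFx, orderOf_injective _ SemidirectProduct.inl_injective]
    show addOrderOf (1 : ZMod n) = n
    exact ZMod.addOrderOf_one n
  have horder : orderOf (PresentedGroup.of (rels := rels) 0) = n := by
    refine Nat.dvd_antisymm (orderOf_dvd_of_pow_eq_one hxn) ?_
    rw [← horderFx]
    exact orderOf_map_dvd F _
  -- g := of 1 has infinite order
  have hg : ¬ IsOfFinOrder (PresentedGroup.of (rels := rels) 1) := by
    intro h
    have h2 : IsOfFinOrder (F (PresentedGroup.of 1)) := F.isOfFinOrder h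
    rw [PresentedGroup.toGroup.of hrel] at h2
    rw [hf1] at h2
    have h3 := (SemidirectProduct.rightHom (φ := φ)).isOfFinOrder h2
    rw [SemidirectProduct.rightHom_inr] at h3
    obtain ⟨m, hm, hme⟩ := isOfFinOrder_iff_pow_eq_one.mp h3
    rw [← ofAdd_nsmul, ofAdd_eq_one, nsmul_eq_mul, mul_one] at hme
    exact_mod_cast absurd hme (by omega)
  have hInf : Infinite P := by
    rw [← not_finite_iff_infinite]
    intro hfin
    exact hg (isOfFinOrder_of_finite _)
  refine ⟨?_, hInf, ⟨_, horder⟩⟩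
  rintro ⟨g, hgen⟩
  by_cases hgfin : IsOfFinOrder g
  · have : (Subgroup.zpowers g : Set P).Finite := hgfin.finite_zpowers
    have : Finite P := by
      have huniv : (Subgroup.zpowers g : Set P) = Set.univ := by
        ext x; simpa [Subgroup.mem_zpowers_iff] using hgen x
      rw [huniv] at this
      exact Set.finite_univ_iff.mp this
    exact absurd this (by rw [not_finite_iff_infinite]; exact hInf)
  · obtain ⟨k, hk⟩ := hgen (PresentedGroup.of 0)
    replace hk : g ^ k = PresentedGroup.of 0 := hk
    have hk1 : g ^ (k * n) = 1 := by
      rw [zpow_mul, hk]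
      exact_mod_cast hxn
    have : k * n = 0 := by
      have hinj := injective_zpow_iff_not_isOfFinOrder.mpr hgfin
      exact hinj (show (fun m : ℤ => g ^ m) (k * n) = (fun m : ℤ => g ^ m) 0 by
        simpa using hk1)
    have hk0 : k = 0 := by
      rcases mul_eq_zero.mp this with h | h
      · exact h
      · exact absurd h (by positivity)
    rw [hk0, zpow_zero] at hk
    rw [← hk, orderOf_one] at horder
    omega
end

section
/- Let m ≥ 2 be a natural number and let E be a group with a normal subgroup N such that N is infinite cyclic (isomorphic to ℤ) and the quotient E/N is cyclic of order m. Then E is cyclic if and only if E is abelian and there exist a generator g of N, an element b ∈ E whose image generates E/N, and an integer t with b^m = g^t and gcd(t, m) = 1. -/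
/-- A group `E` with an infinite cyclic normal subgroup `N` and cyclic quotient of order `m`
is cyclic iff `E` is abelian and there are a generator `g` of `N`, an element `b` whose
image generates `E ⧸ N`, and an integer `t` with `bᵐ = gᵗ` and `gcd(t, m) = 1`. -/
theorem extension_of_infinite_cyclic_isCyclic_iff
    (m : ℕ) (hm : 2 ≤ m)
    (E : Type*) [Group E] (N : Subgroup E) [N.Normal]
    (hNinf : Nonempty (N ≃* Multiplicative ℤ))
    (hQcyc : IsCyclic (E ⧸ N)) (hQcard : Nat.card (E ⧸ N) = m) :
    IsCyclic E ↔
      ((∀ x y : E, x * y = y * x) ∧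
        ∃ (g b : E) (t : ℤ),
          Subgroup.zpowers g = N ∧
          Subgroup.zpowers (QuotientGroup.mk b : E ⧸ N) = ⊤ ∧
          b ^ m = g ^ t ∧ Int.gcd t m = 1) := by
  constructor
  · intro hE
    obtain ⟨c, hc⟩ := hE.exists_generator
    have htop : Subgroup.zpowers (QuotientGroup.mk c : E ⧸ N) = ⊤ := by
      rw [Subgroup.eq_top_iff']
      intro x
      obtain ⟨e, rfl⟩ := QuotientGroup.mk_surjective x
      obtain ⟨k, rfl⟩ := hc e
      exact ⟨k, by simp⟩
    have hord : orderOf (QuotientGroup.mk c : E ⧸ N) = m := by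
      rw [← Nat.card_zpowers, htop, ← hQcard]
      exact Nat.card_congr Subgroup.topEquiv.toEquiv
    refine ⟨fun x y => ?_, c ^ (m : ℤ), c, 1, ?_, htop, ?_, by simp⟩
    · letI := hE.commGroup
      exact mul_comm x y
    · apply le_antisymm
      · rw [Subgroup.zpowers_le, ← QuotientGroup.eq_one_iff]
        have : (QuotientGroup.mk (c ^ (m : ℤ)) : E ⧸ N)
            = (QuotientGroup.mk c : E ⧸ N) ^ (m : ℤ) := by simp
        rw [this, zpow_natCast, ← hord, pow_orderOf_eq_one]
      · intro n hn
        obtain ⟨k, hk⟩ := hc n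
        have hk' : c ^ k = n := hk
        have h1 : (QuotientGroup.mk c : E ⧸ N) ^ k = 1 := by
          rw [← QuotientGroup.mk_zpow, hk', QuotientGroup.eq_one_iff]
          exact hn
        have hdvd : ((m : ℤ)) ∣ k := by
          have := (orderOf_dvd_iff_zpow_eq_one (G := E ⧸ N)).2 h1
          rwa [hord] at this
        obtain ⟨d, rfl⟩ := hdvd
        exact ⟨d, by show (c ^ (m : ℤ)) ^ d = n; rw [← zpow_mul, hk']⟩
    · simp [zpow_natCast]
  · rintro ⟨hcomm, g, b, t, hgN, hbtop, hbm, hgcd⟩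
    letI : CommGroup E := { mul_comm := hcomm }
    obtain ⟨p, q, hpq⟩ := Int.isCoprime_iff_gcd_eq_one.mpr hgcd
    set c : E := b ^ p * g ^ q with hc
    have hcm : c ^ (m : ℤ) = g := by
      rw [hc, mul_zpow, ← zpow_mul, ← zpow_mul, mul_comm p (m : ℤ), zpow_mul,
        zpow_natCast, hbm, ← zpow_mul, ← zpow_add]
      rw [show t * p + q * (m : ℤ) = p * t + q * (m : ℤ) by ring, hpq, zpow_one]
    have hb : b = c ^ t := by
      have hdm : (b * c ^ (-t)) ^ (m : ℤ) = 1 := by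
        rw [mul_zpow, ← zpow_mul, mul_comm (-t) (m : ℤ), zpow_mul, hcm,
          zpow_natCast, hbm, ← zpow_add]
        simp
      have hdp : (b * c ^ (-t)) ^ p = 1 := by
        have h2 : c ^ (q * (m : ℤ) - 1) = g ^ q * c⁻¹ := by
          rw [zpow_sub, zpow_one, mul_comm q ((m : ℕ) : ℤ), zpow_mul, hcm]
        have h3 : -t * p = q * (m : ℤ) - 1 := by linarith [hpq]
        rw [mul_zpow, ← zpow_mul, h3, h2, hc]
        group
      have : (b * c ^ (-t)) = 1 := by
        calc b * c ^ (-t) = (b * c ^ (-t)) ^ (p * t + q * (m : ℤ)) := by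
              rw [hpq, zpow_one]
          _ = ((b * c ^ (-t)) ^ p) ^ t * ((b * c ^ (-t)) ^ (m : ℤ)) ^ q := by
              rw [zpow_add, zpow_mul, mul_comm q ((m : ℕ) : ℤ), zpow_mul]
          _ = 1 := by rw [hdp, hdm]; simp
      have := mul_eq_one_iff_eq_inv.mp this
      rw [this, ← zpow_neg, neg_neg]
    refine ⟨⟨c, fun e => ?_⟩⟩
    have : (QuotientGroup.mk e : E ⧸ N) ∈ Subgroup.zpowers (QuotientGroup.mk b : E ⧸ N) := by
      rw [hbtop]; trivial
    obtain ⟨k, hk⟩ := this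
    have hmem : b ^ (-k) * e ∈ N := by
      rw [← QuotientGroup.eq_one_iff, QuotientGroup.mk_mul, QuotientGroup.mk_zpow, ← hk]
      group
    rw [← hgN] at hmem
    obtain ⟨j, hj⟩ := hmem
    have hj' : g ^ j = b ^ (-k) * e := hj
    have he : e = b ^ k * g ^ j := by
      rw [hj']
      group
    rw [he, hb]
    exact ⟨t * k + (m : ℤ) * j, by
      show c ^ (t * k + (m : ℤ) * j) = (c ^ t) ^ k * g ^ j
      rw [zpow_add, zpow_mul, zpow_mul, hcm]⟩
end
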